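/- Let P and H be real symmetric positive definite N × N matrices, let c > 0 be such that vᵀ P v ≥ c · vᵀ H v for every v ∈ ℝ^N, let A be a real symmetric N × N matrix and let A* be any real N × N matrix. Then for every eigenvalue μ in the complex spectrum of P⁻¹ A* there exists a (real) eigenvalue λ of P⁻¹ A such that |λ − μ| ≤ (1 / c) · ‖H^{-1/2} (A − A*) H^{-1/2}‖. -/

import Mathlib

open scoped Matrix.Norms.L2Operator
open Matrix

noncomputable def psdSqrt {n : ℕ} {M : Matrix (Fin n) (Fin n) ℝ} (hM : M.PosSemidef) :
    Matrix (Fin n) (Fin n) ℝ :=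
  (hM.1.eigenvectorUnitary : Matrix (Fin n) (Fin n) ℝ) * diagonal ((RCLike.ofReal : ℝ → ℝ) ∘ (√·) ∘ hM.1.eigenvalues) *
    (star hM.1.eigenvectorUnitary : Matrix (Fin n) (Fin n) ℝ)

lemma psdSqrt_mul_self {n : ℕ} {M : Matrix (Fin n) (Fin n) ℝ} (hM : M.PosSemidef) :
    psdSqrt hM * psdSqrt hM = M := by
  have hU : (star hM.1.eigenvectorUnitary : Matrix (Fin n) (Fin n) ℝ) *
      (hM.1.eigenvectorUnitary : Matrix (Fin n) (Fin n) ℝ) = 1 :=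
    Unitary.coe_star_mul_self _
  have hD : diagonal ((RCLike.ofReal : ℝ → ℝ) ∘ (√·) ∘ hM.1.eigenvalues) *
      diagonal ((RCLike.ofReal : ℝ → ℝ) ∘ (√·) ∘ hM.1.eigenvalues) =
      diagonal ((RCLike.ofReal : ℝ → ℝ) ∘ hM.1.eigenvalues) := by
    rw [diagonal_mul_diagonal]
    congr 1
    funext i
    simp [Real.mul_self_sqrt (hM.eigenvalues_nonneg i)]
  conv_rhs => rw [hM.1.spectral_theorem, Unitary.conjStarAlgAut_apply]
  unfold psdSqrt
  rw [← hD]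
  simp only [Matrix.mul_assoc]
  rw [← Matrix.mul_assoc (star (hM.1.eigenvectorUnitary : Matrix (Fin n) (Fin n) ℝ))
    (hM.1.eigenvectorUnitary : Matrix (Fin n) (Fin n) ℝ), hU, Matrix.one_mul]

lemma psdSqrt_herm {n : ℕ} {M : Matrix (Fin n) (Fin n) ℝ} (hM : M.PosSemidef) :
    (psdSqrt hM)ᴴ = psdSqrt hM := by
  unfold psdSqrt
  simp [Matrix.conjTranspose_mul, Matrix.star_eq_conjTranspose, Matrix.mul_assoc]


lemma norm_map_complex_le {n : ℕ} (M : Matrix (Fin n) (Fin n) ℝ) :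
    ‖M.map (fun x : ℝ => (x : ℂ))‖ ≤ ‖M‖ := by
  rw [Matrix.l2_opNorm_def]
  refine ContinuousLinearMap.opNorm_le_bound _ (norm_nonneg M) fun x => ?_
  simp only [LinearEquiv.trans_apply, LinearMap.coe_toContinuousLinearMap']
  rw [Matrix.toEuclideanLin_apply]
  set y : Fin n → ℂ := x.ofLp with hy
  set ar : Fin n → ℝ := fun i => (y i).re with har
  set br : Fin n → ℝ := fun i => (y i).im with hbr
  have key : ∀ i, (M.map (fun x : ℝ => (x : ℂ)) *ᵥ y) i
      = Complex.mk ((M *ᵥ ar) i) ((M *ᵥ br) i) := by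
    intro i
    rw [Complex.ext_iff]
    simp only [Matrix.mulVec, dotProduct, Matrix.map_apply]
    constructor
    · rw [Complex.re_sum]
      simp [Complex.mul_re, har]
    · rw [Complex.im_sum]
      simp [Complex.mul_im, hbr]
  -- squares
  have hxsq : ‖x‖ ^ 2 = (∑ i, ar i ^ 2) + (∑ i, br i ^ 2) := by
    rw [EuclideanSpace.norm_eq, Real.sq_sqrt (by positivity), ← Finset.sum_add_distrib]
    refine Finset.sum_congr rfl fun i _ => ?_
    have : ‖x i‖ ^ 2 = Complex.normSq (x i) := Complex.sq_norm (x i)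
    rw [this, Complex.normSq_apply]
    ring_nf
    rfl
  have hmulre : ‖(EuclideanSpace.equiv (Fin n) ℝ).symm (M *ᵥ ar)‖ ≤ ‖M‖ *
      ‖(EuclideanSpace.equiv (Fin n) ℝ).symm ar‖ :=
    Matrix.l2_opNorm_mulVec M ((EuclideanSpace.equiv (Fin n) ℝ).symm ar)
  have hmulim : ‖(EuclideanSpace.equiv (Fin n) ℝ).symm (M *ᵥ br)‖ ≤ ‖M‖ *
      ‖(EuclideanSpace.equiv (Fin n) ℝ).symm br‖ :=
    Matrix.l2_opNorm_mulVec M ((EuclideanSpace.equiv (Fin n) ℝ).symm br)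
  have enorm : ∀ v : Fin n → ℝ, ‖(EuclideanSpace.equiv (Fin n) ℝ).symm v‖ ^ 2 = ∑ i, v i ^ 2 := by
    intro v
    rw [EuclideanSpace.norm_eq, Real.sq_sqrt (by positivity)]
    refine Finset.sum_congr rfl fun i _ => ?_
    rw [Real.norm_eq_abs, sq_abs]
    rfl
  have lhs_sq : ‖WithLp.toLp 2 (M.map (fun x : ℝ => (x : ℂ)) *ᵥ y)‖ ^ 2
      = (∑ i, (M *ᵥ ar) i ^ 2) + (∑ i, (M *ᵥ br) i ^ 2) := by
    rw [EuclideanSpace.norm_eq, Real.sq_sqrt (by positivity), ← Finset.sum_add_distrib]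
    refine Finset.sum_congr rfl fun i _ => ?_
    have h1 : ‖(WithLp.toLp 2 (M.map (fun x : ℝ => (x : ℂ)) *ᵥ y)) i‖ ^ 2
        = Complex.normSq ((M.map (fun x : ℝ => (x : ℂ)) *ᵥ y) i) := Complex.sq_norm _
    rw [h1, key i, Complex.normSq_apply]
    ring
  have rhs_sq : (‖M‖ * ‖x‖) ^ 2 = ‖M‖ ^ 2 * ((∑ i, ar i ^ 2) + (∑ i, br i ^ 2)) := by
    rw [mul_pow, hxsq]
  have bound : ‖WithLp.toLp 2 (M.map (fun x : ℝ => (x : ℂ)) *ᵥ y)‖ ^ 2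
      ≤ (‖M‖ * ‖x‖) ^ 2 := by
    rw [lhs_sq, rhs_sq, mul_add]
    gcongr <;>
    · rw [← enorm]
      calc _ ≤ (‖M‖ * ‖(EuclideanSpace.equiv (Fin n) ℝ).symm _‖) ^ 2 := by
              apply pow_le_pow_left₀ (norm_nonneg _) (by first | exact hmulre | exact hmulim)
           _ = _ := by rw [mul_pow, enorm]
  exact (pow_le_pow_iff_left₀ (norm_nonneg _) (by positivity) two_ne_zero).mp bound


lemma opNorm_le_of_rayleigh {n : ℕ} (M : Matrix (Fin n) (Fin n) ℝ) (hM : M.PosSemidef)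
    (r : ℝ) (hr : 0 ≤ r) (h : ∀ x : Fin n → ℝ, x ⬝ᵥ M *ᵥ x ≤ r * (x ⬝ᵥ x)) : ‖M‖ ≤ r := by
  have hherm : M.IsHermitian := hM.1
  have h1 : ((r • (1 : Matrix (Fin n) (Fin n) ℝ)) - M).PosSemidef := by
    refine Matrix.PosSemidef.of_dotProduct_mulVec_nonneg ?_ ?_
    · show _ = _
      rw [conjTranspose_sub, conjTranspose_smul, conjTranspose_one, hherm.eq, star_trivial]
    · intro x
      have hsx : star x = x := rfl
      simp only [hsx, Matrix.sub_mulVec, Matrix.smul_mulVec, Matrix.one_mulVec,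
        dotProduct_sub, dotProduct_smul, RCLike.re_to_real, smul_eq_mul]
      linarith [h x]
  have hsq : (psdSqrt hM) * (psdSqrt hM) = M := psdSqrt_mul_self hM
  have hcomm : (psdSqrt hM) * M = M * (psdSqrt hM) := by
    calc (psdSqrt hM) * M = (psdSqrt hM) * ((psdSqrt hM) * (psdSqrt hM)) := by rw [hsq]
      _ = (psdSqrt hM) * (psdSqrt hM) * (psdSqrt hM) := by rw [mul_assoc]
      _ = M * (psdSqrt hM) := by rw [hsq]
  have h2 : (psdSqrt hM) * M * (psdSqrt hM) = M * M := by
    rw [hcomm, mul_assoc, hsq]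
  have hconj : (((psdSqrt hM))ᴴ * ((r • (1 : Matrix (Fin n) (Fin n) ℝ)) - M) * (psdSqrt hM)).PosSemidef :=
    h1.conjTranspose_mul_mul_same _
  have hsherm : ((psdSqrt hM))ᴴ = (psdSqrt hM) := psdSqrt_herm hM
  have heq : ((psdSqrt hM))ᴴ * ((r • (1 : Matrix (Fin n) (Fin n) ℝ)) - M) * (psdSqrt hM)
      = r • M - M * M := by
    rw [hsherm, Matrix.mul_sub, Matrix.sub_mul, mul_smul_comm, mul_one, smul_mul_assoc, hsq, h2]
  rw [heq] at hconj
  have hsq2 : ∀ x : Fin n → ℝ, x ⬝ᵥ (M * M) *ᵥ x ≤ r * (x ⬝ᵥ M *ᵥ x) := by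
    intro x
    have := hconj.dotProduct_mulVec_nonneg x
    have hsx : star x = x := rfl
    simp only [hsx, Matrix.sub_mulVec, dotProduct_sub, RCLike.re_to_real,
      Matrix.smul_mulVec, dotProduct_smul, smul_eq_mul] at this
    linarith
  have hT : Mᵀ = M := by rw [← Matrix.conjTranspose_eq_transpose_of_trivial, hherm.eq]
  rw [Matrix.l2_opNorm_def]
  refine ContinuousLinearMap.opNorm_le_bound _ hr fun x => ?_
  simp only [LinearEquiv.trans_apply, LinearMap.coe_toContinuousLinearMap']
  rw [Matrix.toEuclideanLin_apply]
  set y : Fin n → ℝ := (WithLp.equiv 2 _) x with hy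
  have enorm : ∀ v : Fin n → ℝ, ‖(WithLp.equiv 2 (Fin n → ℝ)).symm v‖ ^ 2 = v ⬝ᵥ v := by
    intro v
    rw [EuclideanSpace.norm_eq, Real.sq_sqrt (by positivity)]
    refine Finset.sum_congr rfl fun i _ => ?_
    rw [Real.norm_eq_abs, sq_abs, sq]
    rfl
  have hxn : ‖x‖ ^ 2 = y ⬝ᵥ y := enorm y
  have e1 : (M *ᵥ y) ⬝ᵥ (M *ᵥ y) = y ⬝ᵥ (M * M) *ᵥ y := by
    calc (M *ᵥ y) ⬝ᵥ (M *ᵥ y) = (y ᵥ* M) ⬝ᵥ (M *ᵥ y) := by rw [← Matrix.mulVec_transpose, hT]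
      _ = y ⬝ᵥ M *ᵥ (M *ᵥ y) := (Matrix.dotProduct_mulVec _ _ _).symm
      _ = y ⬝ᵥ (M * M) *ᵥ y := by rw [Matrix.mulVec_mulVec]
  have key : ‖(WithLp.equiv 2 (Fin n → ℝ)).symm (M *ᵥ y)‖ ^ 2 ≤ (r * ‖x‖) ^ 2 := by
    rw [enorm, e1, mul_pow, hxn, sq]
    calc y ⬝ᵥ (M * M) *ᵥ y ≤ r * (y ⬝ᵥ M *ᵥ y) := hsq2 y
      _ ≤ r * (r * (y ⬝ᵥ y)) := by
          have := h y
          nlinarith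
      _ = r * r * (y ⬝ᵥ y) := by ring
  exact (pow_le_pow_iff_left₀ (norm_nonneg _) (by positivity) two_ne_zero).mp key


set_option maxHeartbeats 2000000 in
lemma hermitian_eigenvalue_perturbation {n : ℕ} (B Bs : Matrix (Fin n) (Fin n) ℂ)
    (hB : B.IsHermitian) {μ : ℂ} (hμ : μ ∈ spectrum ℂ Bs) :
    ∃ l : ℝ, l ∈ spectrum ℝ B ∧ ‖(l : ℂ) - μ‖ ≤ ‖Bs - B‖ := by
  rcases Nat.eq_zero_or_pos n with hn | hn
  · subst hn
    exfalso
    have : IsUnit (algebraMap ℂ (Matrix (Fin 0) (Fin 0) ℂ) μ - Bs) := by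
      have : (algebraMap ℂ (Matrix (Fin 0) (Fin 0) ℂ) μ - Bs) = 1 := by
        ext i j; exact i.elim0
      rw [this]; exact isUnit_one
    exact (spectrum.mem_iff.mp hμ) this
  haveI : NeZero n := ⟨hn.ne'⟩
  -- eigenvector of Bs
  have hμ' : μ ∈ spectrum ℂ (Matrix.toEuclideanLin Bs) := by
    rwa [Matrix.spectrum_toEuclideanLin]
  have hev : Module.End.HasEigenvalue (Matrix.toEuclideanLin Bs) μ :=
    Module.End.hasEigenvalue_iff_mem_spectrum.mpr hμ'
  obtain ⟨v, hv⟩ := Module.End.HasEigenvalue.exists_hasEigenvector hev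
  have hvne : v ≠ 0 := hv.right
  have hveq : Matrix.toEuclideanLin Bs v = μ • v := hv.apply_eq_smul
  -- eigenbasis of B
  set b := hB.eigenvectorBasis with hb
  set lam := hB.eigenvalues with hlam
  set c : Fin n → ℂ := fun i => b.repr v i with hc
  have hci : ∀ i, c i = b.repr v i := fun _ => rfl
  -- repr of B action
  have hsym : (Matrix.toEuclideanLin B).IsSymmetric := Matrix.isHermitian_iff_isSymmetric.mp hB
  have hrepr : ∀ i, b.repr (Matrix.toEuclideanLin B v) i = (lam i : ℂ) * c i := by
    intro i
    rw [OrthonormalBasis.repr_apply_apply, ← hsym (b i) v]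
    have hbi : Matrix.toEuclideanLin B (b i) = (lam i : ℂ) • (b i) := by
      rw [Matrix.toEuclideanLin_apply]
      rw [hB.mulVec_eigenvectorBasis i]
      rw [WithLp.toLp_smul, WithLp.toLp_ofLp, RCLike.real_smul_eq_coe_smul (K := ℂ)]
      rfl
    rw [hbi, inner_smul_left, Complex.conj_ofReal]
    congr 1
    exact (OrthonormalBasis.repr_apply_apply b v i).symm
  -- choose minimizing eigenvalue
  obtain ⟨i0, -, hmin⟩ := Finset.exists_min_image Finset.univ
    (fun i => ‖(lam i : ℂ) - μ‖) ⟨⟨0, hn⟩, Finset.mem_univ _⟩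
  set d := ‖(lam i0 : ℂ) - μ‖ with hd
  refine ⟨lam i0, ?_, ?_⟩
  · have := hB.eigenvalues_mem_spectrum_real i0
    exact this
  -- norm computations
  have keyn : ∀ w : EuclideanSpace ℂ (Fin n), ‖w‖ ^ 2 = ∑ i, ‖w i‖ ^ 2 := by
    intro w
    rw [EuclideanSpace.norm_eq, Real.sq_sqrt (by positivity)]
  have hvnorm : ‖v‖ ^ 2 = ∑ i, ‖c i‖ ^ 2 := by
    rw [← b.repr.norm_map v, keyn]
  have hw : ∀ i, b.repr (μ • v - Matrix.toEuclideanLin B v) i = (μ - (lam i : ℂ)) * c i := by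
    intro i
    rw [_root_.map_sub, _root_.map_smul, PiLp.sub_apply, PiLp.smul_apply, hrepr i, ← hci i, smul_eq_mul]
    ring
  have hwnorm : ‖μ • v - Matrix.toEuclideanLin B v‖ ^ 2
      = ∑ i, ‖(μ - (lam i : ℂ)) * c i‖ ^ 2 := by
    rw [← b.repr.norm_map, keyn]
    exact Finset.sum_congr rfl fun i _ => by rw [hw i]
  have hlower : d ^ 2 * ‖v‖ ^ 2 ≤ ‖μ • v - Matrix.toEuclideanLin B v‖ ^ 2 := by
    rw [hwnorm, hvnorm, Finset.mul_sum]
    refine Finset.sum_le_sum fun i _ => ?_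
    rw [norm_mul, mul_pow]
    have h1 : d ≤ ‖μ - (lam i : ℂ)‖ := by
      have := hmin i (Finset.mem_univ i)
      rwa [norm_sub_rev] at this
    have h2 : (0:ℝ) ≤ ‖c i‖ ^ 2 := by positivity
    have hd0 : 0 ≤ d := by rw [hd]; positivity
    exact mul_le_mul_of_nonneg_right (pow_le_pow_left₀ hd0 h1 2) h2
  -- upper bound
  have hupper : ‖μ • v - Matrix.toEuclideanLin B v‖ ≤ ‖Bs - B‖ * ‖v‖ := by
    have : μ • v - Matrix.toEuclideanLin B v = Matrix.toEuclideanLin (Bs - B) v := by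
      rw [_root_.map_sub, LinearMap.sub_apply, hveq]
    rw [this, Matrix.toEuclideanLin_apply]
    exact Matrix.l2_opNorm_mulVec (Bs - B) v
  have hvpos : 0 < ‖v‖ := norm_pos_iff.mpr hvne
  have : d * ‖v‖ ≤ ‖Bs - B‖ * ‖v‖ := by
    have hsq : (d * ‖v‖) ^ 2 ≤ (‖Bs - B‖ * ‖v‖) ^ 2 := by
      rw [mul_pow]
      calc d ^ 2 * ‖v‖ ^ 2 ≤ ‖μ • v - Matrix.toEuclideanLin B v‖ ^ 2 := hlower
        _ ≤ (‖Bs - B‖ * ‖v‖) ^ 2 := by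
            apply pow_le_pow_left₀ (norm_nonneg _) hupper
    have hd0 : 0 ≤ d * ‖v‖ := by positivity
    exact (pow_le_pow_iff_left₀ hd0 (by positivity) two_ne_zero).mp hsq
  have hfin : d ≤ ‖Bs - B‖ := le_of_mul_le_mul_right this hvpos
  calc ‖(lam i0 : ℂ) - μ‖ = d := rfl
    _ ≤ ‖Bs - B‖ := hfin

section helpers
variable {N : ℕ}

lemma map_complex_mul (X Y : Matrix (Fin N) (Fin N) ℝ) :
    (X * Y).map (fun x : ℝ => (x : ℂ)) = X.map (fun x : ℝ => (x : ℂ)) * Y.map (fun x : ℝ => (x : ℂ)) := by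
  ext i j
  simp [Matrix.mul_apply, Matrix.map_apply]

lemma map_complex_sub (X Y : Matrix (Fin N) (Fin N) ℝ) :
    (X - Y).map (fun x : ℝ => (x : ℂ)) = X.map (fun x : ℝ => (x : ℂ)) - Y.map (fun x : ℝ => (x : ℂ)) :=
  Matrix.map_sub _ (fun a b => by push_cast; ring) X Y

lemma map_complex_one :
    (1 : Matrix (Fin N) (Fin N) ℝ).map (fun x : ℝ => (x : ℂ)) = 1 :=
  Matrix.map_one _ (by norm_num) (by norm_num)

end helpers

/-- Quantitative inequality from the proof of Proposition 2: if `P` and `H` are symmetric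
positive definite with `vᵀPv ≥ c·vᵀHv` for all `v`, `A` is symmetric and `A*` arbitrary,
then every complex eigenvalue `μ` of `P⁻¹A*` is within distance
`(1/c)·‖H^{-1/2}(A - A*)H^{-1/2}‖` of some (real) eigenvalue `λ` of `P⁻¹A`. -/
theorem preconditioned_eigenvalue_perturbation_bound
    {N : ℕ} (P H A Astar : Matrix (Fin N) (Fin N) ℝ)
    (hP : P.PosDef) (hH : H.PosDef) (hAsymm : Aᵀ = A)
    (c : ℝ) (hc : 0 < c)
    (coer : ∀ v : Fin N → ℝ, c * (v ⬝ᵥ H.mulVec v) ≤ v ⬝ᵥ P.mulVec v) :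
    ∀ μ ∈ spectrum ℂ ((P⁻¹ * Astar).map (fun x : ℝ => (x : ℂ))),
      ∃ l ∈ spectrum ℝ (P⁻¹ * A),
        ‖(l : ℂ) - μ‖ ≤
          (1 / c) * ‖((hH.posSemidef.1.eigenvectorUnitary : Matrix (Fin N) (Fin N) ℝ) * diagonal ((RCLike.ofReal : ℝ → ℝ) ∘ (√·) ∘ hH.posSemidef.1.eigenvalues) *
            (star hH.posSemidef.1.eigenvectorUnitary : Matrix (Fin N) (Fin N) ℝ))⁻¹ * (A - Astar) * ((hH.posSemidef.1.eigenvectorUnitary : Matrix (Fin N) (Fin N) ℝ) * diagonal ((RCLike.ofReal : ℝ → ℝ) ∘ (√·) ∘ hH.posSemidef.1.eigenvalues) *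
            (star hH.posSemidef.1.eigenvectorUnitary : Matrix (Fin N) (Fin N) ℝ))⁻¹‖ := by
  show ∀ μ ∈ spectrum ℂ ((P⁻¹ * Astar).map (fun x : ℝ => (x : ℂ))),
      ∃ l ∈ spectrum ℝ (P⁻¹ * A),
        ‖(l : ℂ) - μ‖ ≤ (1 / c) * ‖(psdSqrt hH.posSemidef)⁻¹ * (A - Astar) * (psdSqrt hH.posSemidef)⁻¹‖
  intro μ hμ
  set S := psdSqrt hP.posSemidef with hSdef
  set T := psdSqrt hH.posSemidef with hTdef
  have hSsq : S * S = P := psdSqrt_mul_self hP.posSemidef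
  have hTsq : T * T = H := psdSqrt_mul_self hH.posSemidef
  have hSH : Sᴴ = S := psdSqrt_herm hP.posSemidef
  have hTH : Tᴴ = T := psdSqrt_herm hH.posSemidef
  have hTT : Tᵀ = T := by rw [← Matrix.conjTranspose_eq_transpose_of_trivial, hTH]
  have hPdet : IsUnit P.det := isUnit_iff_ne_zero.mpr hP.det_pos.ne'
  have hHdet : IsUnit H.det := isUnit_iff_ne_zero.mpr hH.det_pos.ne'
  have hSdet : IsUnit S.det := by
    rw [isUnit_iff_ne_zero]
    intro h
    apply hP.det_pos.ne'
    rw [← hSsq, Matrix.det_mul, h, mul_zero]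
  have hTdet : IsUnit T.det := by
    rw [isUnit_iff_ne_zero]
    intro h
    apply hH.det_pos.ne'
    rw [← hTsq, Matrix.det_mul, h, mul_zero]
  have hPinv : P⁻¹ = S⁻¹ * S⁻¹ := by rw [← hSsq, Matrix.mul_inv_rev]
  have hSinvH : (S⁻¹)ᴴ = S⁻¹ := by rw [Matrix.conjTranspose_nonsing_inv, hSH]
  set B := S⁻¹ * A * S⁻¹ with hBdef
  set Bs := S⁻¹ * Astar * S⁻¹ with hBsdef
  have hAH : Aᴴ = A := by rw [Matrix.conjTranspose_eq_transpose_of_trivial, hAsymm]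
  have hBherm : B.IsHermitian := by
    show _ = _
    rw [hBdef, Matrix.conjTranspose_mul, Matrix.conjTranspose_mul, hSinvH, hAH]
    rw [Matrix.mul_assoc]
  have hBT : Bᵀ = B := by rw [← Matrix.conjTranspose_eq_transpose_of_trivial, hBherm.eq]
  -- complexifications
  set cc : ℝ → ℂ := fun x : ℝ => (x : ℂ) with hcc
  set Bc := B.map cc with hBcdef
  set Bsc := Bs.map cc with hBscdef
  set Mc := (P⁻¹ * Astar).map cc with hMcdef
  have hBcherm : Bc.IsHermitian := by
    show _ = _
    ext i j
    simp only [hBcdef, Matrix.conjTranspose_apply, Matrix.map_apply, hcc, Complex.star_def,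
      Complex.conj_ofReal]
    exact congrArg (fun t : ℝ => (t : ℂ)) (show B j i = B i j from congrFun (congrFun hBT i) j)
  -- unit for conjugation over ℂ
  have hSS' : S * S⁻¹ = 1 := Matrix.mul_nonsing_inv S hSdet
  have hS'S : S⁻¹ * S = 1 := Matrix.nonsing_inv_mul S hSdet
  set u : (Matrix (Fin N) (Fin N) ℂ)ˣ :=
    ⟨S.map cc, (S⁻¹).map cc,
      by rw [← map_complex_mul, hSS', map_complex_one],
      by rw [← map_complex_mul, hS'S, map_complex_one]⟩ with hu
  have hconj : Bsc = (u : Matrix (Fin N) (Fin N) ℂ) * Mc *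
      ((u⁻¹ : (Matrix (Fin N) (Fin N) ℂ)ˣ) : Matrix (Fin N) (Fin N) ℂ) := by
    show Bsc = S.map cc * Mc * (S⁻¹).map cc
    rw [hMcdef, ← map_complex_mul, ← map_complex_mul, hBscdef]
    congr 1
    rw [hPinv, hBsdef]
    simp only [Matrix.mul_assoc]
    rw [← Matrix.mul_assoc S (S⁻¹), hSS', Matrix.one_mul]
  have hμBsc : μ ∈ spectrum ℂ Bsc := by
    rw [hconj, spectrum.units_conjugate]
    exact hμ
  obtain ⟨l, hlspec, hlbound⟩ := hermitian_eigenvalue_perturbation Bc Bsc hBcherm hμBsc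
  refine ⟨l, ?_, ?_⟩
  · -- l ∈ spectrum ℝ (P⁻¹ * A)
    have hl1 : l ∈ spectrum ℝ B := by
      rw [spectrum.mem_iff] at hlspec ⊢
      intro hun
      apply hlspec
      have hmap : (algebraMap ℝ (Matrix (Fin N) (Fin N) ℝ) l - B).map cc
          = algebraMap ℝ (Matrix (Fin N) (Fin N) ℂ) l - Bc := by
        rw [map_complex_sub, Matrix.algebraMap_eq_diagonal, Matrix.algebraMap_eq_diagonal]
        congr 1
        rw [Matrix.diagonal_map (by norm_num)]
        rfl
      rw [← hmap]
      rw [Matrix.isUnit_iff_isUnit_det] at hun ⊢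
      have hdet : ((algebraMap ℝ (Matrix (Fin N) (Fin N) ℝ) l - B).map cc).det
          = Complex.ofRealHom ((algebraMap ℝ (Matrix (Fin N) (Fin N) ℝ) l - B).det) := by
        rw [show (algebraMap ℝ (Matrix (Fin N) (Fin N) ℝ) l - B).map cc
            = Complex.ofRealHom.mapMatrix (algebraMap ℝ (Matrix (Fin N) (Fin N) ℝ) l - B) from rfl]
        exact (RingHom.map_det _ _).symm
      rw [hdet]
      exact hun.map Complex.ofRealHom
    have hsim : P⁻¹ * A = S⁻¹ * B * S := by
      rw [hPinv, hBdef]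
      simp only [Matrix.mul_assoc]
      rw [hS'S, Matrix.mul_one]
    set w : (Matrix (Fin N) (Fin N) ℝ)ˣ := ⟨S⁻¹, S, hS'S, hSS'⟩ with hw
    have : spectrum ℝ (P⁻¹ * A) = spectrum ℝ B := by
      rw [hsim]
      exact spectrum.units_conjugate (u := w)
    rw [this]
    exact hl1
  · -- norm bound
    set F := T⁻¹ * (A - Astar) * T⁻¹ with hF
    have hTFT : T * F * T = A - Astar := by
      rw [hF]
      simp only [Matrix.mul_assoc]
      rw [Matrix.nonsing_inv_mul T hTdet, Matrix.mul_one, ← Matrix.mul_assoc,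
        Matrix.mul_nonsing_inv T hTdet, Matrix.one_mul]
    have hBsB : Bs - B = -(S⁻¹ * (A - Astar) * S⁻¹) := by
      rw [hBsdef, hBdef]
      rw [Matrix.mul_sub, Matrix.sub_mul]
      abel
    set G := S⁻¹ * T with hG
    have hGH : Gᴴ = T * S⁻¹ := by rw [hG, Matrix.conjTranspose_mul, hTH, hSinvH]
    have hE : S⁻¹ * (A - Astar) * S⁻¹ = G * F * Gᴴ := by
      rw [hGH, hG, ← hTFT]
      simp only [Matrix.mul_assoc]
    have hGG : Gᴴ * G = T * P⁻¹ * T := by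
      rw [hGH, hG, hPinv]
      simp only [Matrix.mul_assoc]
    -- Rayleigh bound for T * P⁻¹ * T
    have hpsd : (T * P⁻¹ * T).PosSemidef := by
      have := (hP.inv.posSemidef).conjTranspose_mul_mul_same T
      rwa [hTH] at this
    have hray : ∀ x : Fin N → ℝ, x ⬝ᵥ (T * P⁻¹ * T) *ᵥ x ≤ (1 / c) * (x ⬝ᵥ x) := by
      intro x
      set q := P⁻¹ *ᵥ (T *ᵥ x) with hq
      have e1 : (T * P⁻¹ * T) *ᵥ x = T *ᵥ q := by
        rw [hq, Matrix.mulVec_mulVec, Matrix.mulVec_mulVec]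
      have e2 : x ⬝ᵥ (T *ᵥ q) = (T *ᵥ x) ⬝ᵥ q := by
        rw [Matrix.dotProduct_mulVec, ← Matrix.mulVec_transpose, hTT]
      have e3 : T *ᵥ x = P *ᵥ q := by
        rw [hq, Matrix.mulVec_mulVec, Matrix.mul_nonsing_inv P hPdet, Matrix.one_mulVec]
      set m := x ⬝ᵥ (T * P⁻¹ * T) *ᵥ x with hm
      have hm1 : m = q ⬝ᵥ P *ᵥ q := by
        rw [hm, e1, e2, e3, dotProduct_comm]
      have hHq : q ⬝ᵥ H *ᵥ q = (T *ᵥ q) ⬝ᵥ (T *ᵥ q) := by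
        rw [← hTsq, ← Matrix.mulVec_mulVec, Matrix.dotProduct_mulVec, ← Matrix.mulVec_transpose,
          hTT]
      have hcoer : c * ((T *ᵥ q) ⬝ᵥ (T *ᵥ q)) ≤ m := by
        rw [hm1, ← hHq]
        exact coer q
      have hcs : m ^ 2 ≤ (x ⬝ᵥ x) * ((T *ᵥ q) ⬝ᵥ (T *ᵥ q)) := by
        have : m = x ⬝ᵥ (T *ᵥ q) := by rw [hm, e1]
        rw [this]
        simpa [dotProduct, sq] using
          Finset.sum_mul_sq_le_sq_mul_sq Finset.univ x (T *ᵥ q)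
      have hq0 : 0 ≤ (T *ᵥ q) ⬝ᵥ (T *ᵥ q) := Finset.sum_nonneg fun i _ => mul_self_nonneg _
      have hx0 : 0 ≤ x ⬝ᵥ x := Finset.sum_nonneg fun i _ => mul_self_nonneg _
      by_cases hmneg : m ≤ 0
      · calc m ≤ 0 := hmneg
          _ ≤ 1 / c * (x ⬝ᵥ x) := by positivity
      · push_neg at hmneg
        rw [div_mul_eq_mul_div, le_div_iff₀ hc]
        nlinarith [mul_le_mul_of_nonneg_left hcoer (le_of_lt hmneg)]
    have hTPT : ‖T * P⁻¹ * T‖ ≤ 1 / c :=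
      opNorm_le_of_rayleigh _ hpsd _ (by positivity) hray
    -- assemble
    have h1 : ‖Bsc - Bc‖ ≤ ‖Bs - B‖ := by
      rw [hBscdef, hBcdef, ← map_complex_sub]
      exact norm_map_complex_le _
    have h2 : ‖Bs - B‖ = ‖G * F * Gᴴ‖ := by rw [hBsB, norm_neg, hE]
    have h3 : ‖G * F * Gᴴ‖ ≤ ‖G‖ * ‖F‖ * ‖Gᴴ‖ :=
      le_trans (Matrix.l2_opNorm_mul _ _)
        (mul_le_mul_of_nonneg_right (Matrix.l2_opNorm_mul _ _) (norm_nonneg _))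
    have h4 : ‖G‖ * ‖F‖ * ‖Gᴴ‖ = (‖G‖ * ‖G‖) * ‖F‖ := by
      rw [Matrix.l2_opNorm_conjTranspose]
      ring
    have h5 : ‖G‖ * ‖G‖ = ‖T * P⁻¹ * T‖ := by
      rw [← Matrix.l2_opNorm_conjTranspose_mul_self, hGG]
    calc ‖(l : ℂ) - μ‖ ≤ ‖Bsc - Bc‖ := hlbound
      _ ≤ ‖Bs - B‖ := h1
      _ = ‖G * F * Gᴴ‖ := h2
      _ ≤ ‖G‖ * ‖F‖ * ‖Gᴴ‖ := h3
      _ = (‖G‖ * ‖G‖) * ‖F‖ := h4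
      _ = ‖T * P⁻¹ * T‖ * ‖F‖ := by rw [h5]
      _ ≤ (1 / c) * ‖F‖ := mul_le_mul_of_nonneg_right hTPT (norm_nonneg _)
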